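/- arXiv:1705.04431 — 3 statements merged into one kernel-verified Lean document; each statement's English description precedes it below -/
import Mathlib

section
/- Let C₁ ≥ 0 and let v : [−1,1] → ℝ be C² with v'(x) ≠ 0 for all x and |v''(x)/v'(x)| ≤ C₁ for all x ∈ [−1,1]. Then for every x ∈ [−1,1]: e^{−2C₁} · |v(1) − v(−1)|/2 ≤ |v'(x)| ≤ (1 + 2C₁) · |v(1) − v(−1)|/2. -/
open Set intervalIntegral Real


/-- If `v` is `C²` on `[-1,1]` with nonvanishing derivative and
distortion bound `|v''/v'| ≤ C₁`, then for all `x ∈ [-1,1]`,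
`e^{-2C₁} |v(1) - v(-1)|/2 ≤ |v'(x)| ≤ (1 + 2C₁) |v(1) - v(-1)|/2`. -/
theorem distortion_derivative_bounds
    (C₁ : ℝ) (hC₁ : 0 ≤ C₁) (v : ℝ → ℝ)
    (hreg : ContDiffOn ℝ 2 v (Set.Icc (-1) 1))
    (hne : ∀ x ∈ Set.Icc (-1 : ℝ) 1, derivWithin v (Set.Icc (-1) 1) x ≠ 0)
    (hdist : ∀ x ∈ Set.Icc (-1 : ℝ) 1,
      |iteratedDerivWithin 2 v (Set.Icc (-1) 1) x| ≤
        C₁ * |derivWithin v (Set.Icc (-1) 1) x|) :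
    ∀ x ∈ Set.Icc (-1 : ℝ) 1,
      Real.exp (-2 * C₁) * |v 1 - v (-1)| / 2 ≤ |derivWithin v (Set.Icc (-1) 1) x| ∧
        |derivWithin v (Set.Icc (-1) 1) x| ≤ (1 + 2 * C₁) * |v 1 - v (-1)| / 2 := by
  have hI12 : (-1:ℝ) ≤ 1 := by norm_num
  set I : Set ℝ := Set.Icc (-1) 1 with hIdef
  set g : ℝ → ℝ := derivWithin v I with hgdef
  set G : ℝ → ℝ := iteratedDerivWithin 2 v I with hGdef
  have hUD : UniqueDiffOn ℝ I := uniqueDiffOn_Icc (by norm_num)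
  have hgC1 : ContDiffOn ℝ 1 g I := hreg.derivWithin hUD (by norm_num)
  have hcontg : ContinuousOn g I := hgC1.continuousOn
  have hcontG : ContinuousOn G I :=
    hreg.continuousOn_iteratedDerivWithin le_rfl hUD
  have hgdiff : ∀ x ∈ I, HasDerivWithinAt g (G x) I x := by
    intro x hx
    have h := ((hgC1.differentiableOn one_ne_zero) x hx).hasDerivWithinAt
    have hG : G x = derivWithin g I x := by
      rw [hGdef]
      rw [show (2:ℕ) = 1 + 1 from rfl, iteratedDerivWithin_succ',
        iteratedDerivWithin_one]
    rwa [← hG] at h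
  -- FTC for v
  have hvd : ∀ y ∈ Set.Ioo (-1:ℝ) 1, HasDerivAt v (g y) y := by
    intro y hy
    exact (((hreg.differentiableOn (by norm_num)) y
      (Ioo_subset_Icc_self hy)).hasDerivWithinAt).hasDerivAt
      (Icc_mem_nhds hy.1 hy.2)
  have hIntg : IntervalIntegrable g MeasureTheory.volume (-1) 1 :=
    (hcontg.mono (by rw [hIdef]; exact fun y hy => by rwa [uIcc_of_le hI12] at hy)).intervalIntegrable
  have hftc : ∫ t in (-1:ℝ)..1, g t = v 1 - v (-1) := by
    apply intervalIntegral.integral_eq_sub_of_hasDeriv_right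
    · rw [uIcc_of_le hI12]; exact hreg.continuousOn
    · intro y hy
      rw [min_eq_left hI12, max_eq_right hI12] at hy
      exact (hvd y hy).hasDerivWithinAt
    · exact hIntg
  -- FTC for g
  have hsub : ∀ t ∈ I, ∀ x ∈ I, Set.uIcc t x ⊆ I := by
    intro t ht x hx
    rw [hIdef]
    exact Set.uIcc_subset_Icc ht hx
  have hgftc : ∀ t ∈ I, ∀ x ∈ I, ∫ s in t..x, G s = g x - g t := by
    intro t ht x hx
    apply intervalIntegral.integral_eq_sub_of_hasDeriv_right
    · exact hcontg.mono (hsub t ht x hx)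
    · intro s hs
      have hsI : s ∈ Set.Ioo (-1:ℝ) 1 := by
        constructor
        · exact lt_of_le_of_lt (le_min ht.1 hx.1) hs.1
        · exact lt_of_lt_of_le hs.2 (max_le ht.2 hx.2)
      exact ((hgdiff s (Ioo_subset_Icc_self hsI)).hasDerivAt
        (Icc_mem_nhds hsI.1 hsI.2)).hasDerivWithinAt
    · exact (hcontG.mono (hsub t ht x hx)).intervalIntegrable
  -- constant sign of g
  have hm1 : (-1:ℝ) ∈ I := by rw [hIdef]; exact ⟨le_refl _, hI12⟩
  have hsgn : (∀ t ∈ I, 0 < g t) ∨ (∀ t ∈ I, g t < 0) := by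
    rcases (hne (-1) hm1).lt_or_gt with hneg | hpos
    · right
      intro t ht
      by_contra h
      push_neg at h
      have h0 : (0:ℝ) ∈ Set.uIcc (g (-1)) (g t) := by
        rw [Set.mem_uIcc]; left; exact ⟨hneg.le, h⟩
      obtain ⟨c, hc, hc0⟩ := intermediate_value_uIcc
        (hcontg.mono (hsub (-1) hm1 t ht)) h0
      exact hne c (hsub (-1) hm1 t ht hc) hc0
    · left
      intro t ht
      by_contra h
      push_neg at h
      have h0 : (0:ℝ) ∈ Set.uIcc (g (-1)) (g t) := by
        rw [Set.mem_uIcc]; right; exact ⟨h, hpos.le⟩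
      obtain ⟨c, hc, hc0⟩ := intermediate_value_uIcc
        (hcontg.mono (hsub (-1) hm1 t ht)) h0
      exact hne c (hsub (-1) hm1 t ht hc) hc0
  set D : ℝ := ∫ t in (-1:ℝ)..1, |g t| with hDdef
  have hIntabsg : IntervalIntegrable (fun t => |g t|) MeasureTheory.volume (-1) 1 :=
    hIntg.abs
  have hDnn : 0 ≤ D := intervalIntegral.integral_nonneg hI12 (fun t ht => abs_nonneg _)
  have hD : |v 1 - v (-1)| = D := by
    rcases hsgn with hpos | hneg
    · have he : D = ∫ t in (-1:ℝ)..1, g t := by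
        apply intervalIntegral.integral_congr
        intro t ht
        rw [uIcc_of_le hI12] at ht
        exact abs_of_pos (hpos t ht)
      rw [← hftc, ← he, abs_of_nonneg hDnn]
    · have he : D = ∫ t in (-1:ℝ)..1, -(g t) := by
        apply intervalIntegral.integral_congr
        intro t ht
        rw [uIcc_of_le hI12] at ht
        exact abs_of_neg (hneg t ht)
      rw [intervalIntegral.integral_neg, hftc] at he
      have h0 : 0 ≤ -(v 1 - v (-1)) := he ▸ hDnn
      rw [he, abs_of_nonpos (by linarith)]
  have hIntabsG : IntervalIntegrable (fun t => |G t|) MeasureTheory.volume (-1) 1 :=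
    ((hcontG.mono (by rw [hIdef]; exact fun y hy => by rwa [uIcc_of_le hI12] at hy)).intervalIntegrable).abs
  have hDG : ∫ s in (-1:ℝ)..1, |G s| ≤ C₁ * D := by
    have h1 : ∫ s in (-1:ℝ)..1, |G s| ≤ ∫ s in (-1:ℝ)..1, C₁ * |g s| := by
      apply intervalIntegral.integral_mono_on hI12 hIntabsG (hIntabsg.const_mul C₁)
      intro s hs
      exact hdist s hs
    rwa [intervalIntegral.integral_const_mul] at h1
  intro x hx
  -- upper bound
  have key : ∀ t ∈ I, |g x| ≤ |g t| + C₁ * D := by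
    intro t ht
    have h1 : |g x - g t| ≤ C₁ * D := by
      rw [← hgftc t ht x hx]
      calc |(∫ s in t..x, G s)| ≤ |(∫ s in t..x, |G s|)| := by
              simpa [Real.norm_eq_abs] using
                intervalIntegral.norm_integral_le_abs_integral_norm
                  (f := G) (a := t) (b := x) (μ := MeasureTheory.volume)
        _ ≤ |(∫ s in (-1:ℝ)..1, |G s|)| := by
              apply intervalIntegral.abs_integral_mono_interval
              · rw [uIoc_of_le hI12]
                exact fun s hs => Set.mem_of_mem_of_subset hs
                  (Set.Ioc_subset_Ioc (le_min ht.1 hx.1) (max_le ht.2 hx.2))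
              · exact MeasureTheory.ae_of_all _ fun s => abs_nonneg _
              · exact hIntabsG
        _ = ∫ s in (-1:ℝ)..1, |G s| :=
              abs_of_nonneg (intervalIntegral.integral_nonneg hI12 fun s hs => abs_nonneg _)
        _ ≤ C₁ * D := hDG
    have h2 : |g x| - |g t| ≤ |g x - g t| := abs_sub_abs_le_abs_sub _ _
    linarith
  have hup : 2 * |g x| ≤ D + 2 * (C₁ * D) := by
    have hmono := intervalIntegral.integral_mono_on hI12
      (_root_.intervalIntegrable_const (c := |g x|))
      (hIntabsg.add (_root_.intervalIntegrable_const (c := C₁ * D)))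
      (fun t ht => key t ht)
    rw [intervalIntegral.integral_const,
      intervalIntegral.integral_add hIntabsg (_root_.intervalIntegrable_const (c := C₁ * D)),
      intervalIntegral.integral_const] at hmono
    simp only [smul_eq_mul] at hmono
    rw [← hDdef] at hmono
    linarith
  -- Gronwall growth bound
  have grow : ∀ t ∈ I, |g t| ≤ Real.exp (2 * C₁) * |g x| := by
    intro t ht
    have hfin : ∀ d : ℝ, d ≤ 2 → |g t| ≤ |g x| * Real.exp (C₁ * d) →
        |g t| ≤ Real.exp (2 * C₁) * |g x| := by
      intro d hd h
      have he : Real.exp (C₁ * d) ≤ Real.exp (2 * C₁) :=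
        Real.exp_le_exp.mpr (by nlinarith)
      calc |g t| ≤ |g x| * Real.exp (C₁ * d) := h
        _ ≤ |g x| * Real.exp (2 * C₁) :=
            mul_le_mul_of_nonneg_left he (abs_nonneg _)
        _ = Real.exp (2 * C₁) * |g x| := mul_comm _ _
    rcases le_total x t with hxt | htx
    · have hgb := norm_le_gronwallBound_of_norm_deriv_right_le
        (f := g) (f' := G) (δ := |g x|) (K := C₁) (ε := 0) (a := x) (b := 1)
        (hcontg.mono (Set.Icc_subset_Icc hx.1 le_rfl))
        (by
          intro s hs
          have hsI : s ∈ I := ⟨hx.1.trans hs.1, hs.2.le⟩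
          have h' : HasDerivWithinAt g (G s) (Set.Icc s 1) s :=
            (hgdiff s hsI).mono (Set.Icc_subset_Icc hsI.1 le_rfl)
          apply h'.mono_of_mem_nhdsWithin
          rw [← Set.Ici_inter_Iic]
          exact Filter.inter_mem self_mem_nhdsWithin
            (mem_nhdsWithin_of_mem_nhds (Iic_mem_nhds hs.2)))
        (by rw [Real.norm_eq_abs])
        (by
          intro s hs
          have hsI : s ∈ I := ⟨hx.1.trans hs.1, hs.2.le⟩
          rw [Real.norm_eq_abs, Real.norm_eq_abs, add_zero]
          exact hdist s hsI)
        t ⟨hxt, ht.2⟩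
      rw [gronwallBound_ε0, Real.norm_eq_abs] at hgb
      exact hfin (t - x) (by linarith [hx.1, ht.2]) hgb
    · have hgb := norm_le_gronwallBound_of_norm_deriv_right_le
        (f := fun s => g (-s)) (f' := fun s => -(G (-s))) (δ := |g x|) (K := C₁) (ε := 0)
        (a := -x) (b := 1)
        (by
          apply hcontg.comp (continuous_neg.continuousOn)
          intro s hs
          simp only [hIdef, Set.mem_Icc] at hs ⊢
          constructor <;> linarith [hs.1, hs.2, hx.1, hx.2])
        (by
          intro s hs
          have hsI : -s ∈ I := by
            simp only [hIdef, Set.mem_Icc]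
            constructor <;> linarith [hs.1, hs.2, hx.1, hx.2]
          have hgs : HasDerivWithinAt g (G (-s)) (Set.Icc (-1) (-s)) (-s) :=
            (hgdiff _ hsI).mono (Set.Icc_subset_Icc le_rfl hsI.2)
          have hmem : Set.Icc (-1:ℝ) (-s) ∈ nhdsWithin (-s) (Set.Iic (-s)) := by
            rw [← Set.Ici_inter_Iic]
            exact Filter.inter_mem
              (mem_nhdsWithin_of_mem_nhds (Ici_mem_nhds (by linarith [hs.2])))
              self_mem_nhdsWithin
          have hgs' : HasDerivWithinAt g (G (-s)) (Set.Iic (-s)) (-s) :=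
            hgs.mono_of_mem_nhdsWithin hmem
          have hneg : HasDerivWithinAt (fun u : ℝ => -u) (-1) (Set.Ici s) s :=
            (hasDerivAt_neg s).hasDerivWithinAt
          have hcomp := HasDerivWithinAt.comp s hgs' hneg
            (fun u hu => by simp only [Set.mem_Iic]; exact neg_le_neg hu)
          simpa [Function.comp_def, mul_neg_one] using hcomp)
        (by simp [Real.norm_eq_abs])
        (by
          intro s hs
          have hsI : -s ∈ I := by
            simp only [hIdef, Set.mem_Icc]
            constructor <;> linarith [hs.1, hs.2, hx.1, hx.2]
          rw [Real.norm_eq_abs, Real.norm_eq_abs, abs_neg, add_zero]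
          exact hdist _ hsI)
        (-t) ⟨by linarith, by linarith [ht.1]⟩
      simp only [gronwallBound_ε0, Real.norm_eq_abs, neg_neg] at hgb
      exact hfin (-t - -x) (by linarith [ht.1, hx.2]) hgb
  -- lower bound
  have hlow : D ≤ 2 * (Real.exp (2 * C₁) * |g x|) := by
    have hmono := intervalIntegral.integral_mono_on hI12 hIntabsg
      (_root_.intervalIntegrable_const (c := Real.exp (2 * C₁) * |g x|))
      (fun t ht => grow t ht)
    rw [intervalIntegral.integral_const] at hmono
    simp only [smul_eq_mul] at hmono
    rw [← hDdef] at hmono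
    linarith
  rw [hD]
  constructor
  · have hexp : Real.exp (-2 * C₁) * Real.exp (2 * C₁) = 1 := by
      rw [← Real.exp_add]; norm_num
    have h1 : Real.exp (-2 * C₁) * D ≤ 2 * |g x| := by
      have := mul_le_mul_of_nonneg_left hlow (Real.exp_pos (-2 * C₁)).le
      nlinarith [abs_nonneg (g x), Real.exp_pos (-2 * C₁)]
    linarith
  · linarith
end

section
/- Let Φ and Γ be countable index sets indexing the branches of two full-branch Markov maps f and g on [−1,1]: for φ ∈ Φ let v^f_φ : [−1,1] → [−1,1] be a C² strictly monotone map onto the closure of an open interval O^f_φ ⊂ (−1,1), the intervals O^f_φ being pairwise disjoint, with |( v^f_φ)''(x)/(v^f_φ)'(x)| ≤ C₁ for all x; for γ ∈ Γ let v^g_γ : [−1,1] → [−1,1] be a C¹ strictly monotone map onto the closure of an open interval O^g_γ ⊂ (−1,1), the intervals O^g_γ being pairwise disjoint, with |(v^g_γ)'(x)| ≤ 1/λ_g for all x, where λ_g > 0. Suppose both families satisfy a partition spacing bound: |O^f_φ| ≤ Ξ_f · dist(σ, O^f_φ) whenever σ ∈ {−1,1} is not in the closure of O^f_φ, and |O^g_γ|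 ≤ Ξ_g · dist(σ, O^g_γ) whenever σ ∈ {−1,1} is not in the closure of O^g_γ. Then the branch intervals of the composition, O_{φγ} := interior of v^f_φ(v^g_γ([−1,1])), satisfy: for every φ ∈ Φ, γ ∈ Γ and every σ ∈ {−1,1} not in the closure of O_{φγ}, |O_{φγ}| ≤ (1 + 2C₁) · max{ e^{2C₁} Ξ_g, Ξ_f/λ_g } · dist(σ, O_{φγ}). -/
open Set Metric Real Filter Topology intervalIntegral

section PSC17helpers

lemma infDist_Ioo_left {a b σ : ℝ} (hab : a < b) (hσ : σ ≤ a) :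
    Metric.infDist σ (Set.Ioo a b) = a - σ := by
  rw [← Metric.infDist_closure, closure_Ioo hab.ne]
  refine le_antisymm ?_ ?_
  · have := Metric.infDist_le_dist_of_mem (x := σ) (left_mem_Icc.2 hab.le)
    rwa [Real.dist_eq, abs_of_nonpos (by linarith), neg_sub] at this
  · refine le_of_not_gt fun h => ?_
    obtain ⟨y, hy, hd⟩ := (Metric.infDist_lt_iff ⟨a, left_mem_Icc.2 hab.le⟩).1 h
    rw [Real.dist_eq, abs_of_nonpos (by rcases hy with ⟨h1, _⟩; linarith)] at hd
    rcases hy with ⟨h1, _⟩; linarith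

lemma infDist_Ioo_right {a b σ : ℝ} (hab : a < b) (hσ : b ≤ σ) :
    Metric.infDist σ (Set.Ioo a b) = σ - b := by
  rw [← Metric.infDist_closure, closure_Ioo hab.ne]
  refine le_antisymm ?_ ?_
  · have := Metric.infDist_le_dist_of_mem (x := σ) (right_mem_Icc.2 hab.le)
    rwa [Real.dist_eq, abs_of_nonneg (by linarith)] at this
  · refine le_of_not_gt fun h => ?_
    obtain ⟨y, hy, hd⟩ := (Metric.infDist_lt_iff ⟨b, right_mem_Icc.2 hab.le⟩).1 h
    rw [Real.dist_eq, abs_of_nonneg (by rcases hy with ⟨_, h2⟩; linarith)] at hd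
    rcases hy with ⟨_, h2⟩; linarith

lemma deriv_nonneg_of_mono {f : ℝ → ℝ} {m x : ℝ} (hx : x ∈ Icc (-1:ℝ) 1)
    (hf : MonotoneOn f (Icc (-1:ℝ) 1)) (hd : HasDerivWithinAt f m (Icc (-1:ℝ) 1) x) : 0 ≤ m := by
  rcases lt_or_eq_of_le hx.2 with hx1 | hx1
  · have hd' : HasDerivWithinAt f m (Ioc x 1) x :=
      hd.mono (fun y hy => ⟨le_trans hx.1 hy.1.le, hy.2⟩)
    rw [hasDerivWithinAt_iff_tendsto_slope] at hd'
    have heq : Ioc x 1 \ {x} = Ioc x 1 := diff_singleton_eq_self (fun h => lt_irrefl x h.1)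
    rw [heq] at hd'
    have hne : (𝓝[Ioc x 1] x).NeBot := by
      rw [nhdsWithin_Ioc_eq_nhdsGT hx1]; infer_instance
    refine ge_of_tendsto hd' ?_
    filter_upwards [self_mem_nhdsWithin] with y hy
    rw [slope_def_field]
    have h1 : f x ≤ f y := hf hx ⟨le_trans hx.1 hy.1.le, hy.2⟩ hy.1.le
    have h2 : x < y := hy.1
    apply div_nonneg <;> linarith
  · have hx0 : (-1:ℝ) < x := by rw [hx1]; norm_num
    have hd' : HasDerivWithinAt f m (Ico (-1) x) x :=
      hd.mono (fun y hy => ⟨hy.1, le_trans hy.2.le hx.2⟩)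
    rw [hasDerivWithinAt_iff_tendsto_slope] at hd'
    have heq : Ico (-1:ℝ) x \ {x} = Ico (-1) x := diff_singleton_eq_self (fun h => lt_irrefl x h.2)
    rw [heq] at hd'
    have hne : (𝓝[Ico (-1:ℝ) x] x).NeBot := by
      rw [nhdsWithin_Ico_eq_nhdsLT hx0]; infer_instance
    refine ge_of_tendsto hd' ?_
    filter_upwards [self_mem_nhdsWithin] with y hy
    rw [slope_def_field]
    have h1 : f y ≤ f x := hf ⟨hy.1, le_trans hy.2.le hx.2⟩ hx hy.2.le
    have h2 : y < x := hy.2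
    exact div_nonneg_of_nonpos (by linarith) (by linarith)

lemma gronwall_right {ρ ρ' : ℝ → ℝ} {C₁ : ℝ} (hC : 0 ≤ C₁)
    (hd : ∀ t ∈ Icc (-1:ℝ) 1, HasDerivWithinAt ρ (ρ' t) (Icc (-1:ℝ) 1) t)
    (hb : ∀ t ∈ Icc (-1:ℝ) 1, |ρ' t| ≤ C₁ * |ρ t|)
    {x y : ℝ} (hx : x ∈ Icc (-1:ℝ) 1) (hy : y ∈ Icc (-1:ℝ) 1) (hxy : x ≤ y) :
    |ρ y| ≤ |ρ x| * Real.exp (C₁ * (y - x)) := by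
  have hcont : ContinuousOn ρ (Icc (-1:ℝ) 1) := fun t ht => (hd t ht).continuousWithinAt
  have H := norm_le_gronwallBound_of_norm_deriv_right_le (f := ρ) (f' := ρ') (δ := |ρ x|)
    (K := C₁) (ε := 0) (a := x) (b := y)
    (hcont.mono (Icc_subset_Icc hx.1 hy.2)) ?_ (by simp [Real.norm_eq_abs]) ?_ y
    (right_mem_Icc.2 hxy)
  · rwa [gronwallBound_ε0, Real.norm_eq_abs] at H
  · intro t ht
    have htI : t ∈ Icc (-1:ℝ) 1 := ⟨le_trans hx.1 ht.1, le_trans ht.2.le hy.2⟩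
    exact (hd t htI).mono_of_mem_nhdsWithin
      (Icc_mem_nhdsGE_of_mem ⟨htI.1, lt_of_lt_of_le ht.2 hy.2⟩)
  · intro t ht
    have htI : t ∈ Icc (-1:ℝ) 1 := ⟨le_trans hx.1 ht.1, le_trans ht.2.le hy.2⟩
    simpa [Real.norm_eq_abs] using hb t htI

lemma gronwall_pair {ρ ρ' : ℝ → ℝ} {C₁ : ℝ} (hC : 0 ≤ C₁)
    (hd : ∀ t ∈ Icc (-1:ℝ) 1, HasDerivWithinAt ρ (ρ' t) (Icc (-1:ℝ) 1) t)
    (hb : ∀ t ∈ Icc (-1:ℝ) 1, |ρ' t| ≤ C₁ * |ρ t|)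
    {x y : ℝ} (hx : x ∈ Icc (-1:ℝ) 1) (hy : y ∈ Icc (-1:ℝ) 1) :
    |ρ y| ≤ |ρ x| * Real.exp (C₁ * |y - x|) := by
  rcases le_total x y with hxy | hxy
  · rw [show |y - x| = y - x from abs_of_nonneg (by linarith)]
    exact gronwall_right hC hd hb hx hy hxy
  · rw [show |y - x| = x - y by rw [abs_of_nonpos (by linarith : y - x ≤ 0)]; ring]
    set τ : ℝ → ℝ := fun t => ρ (-t) with hτ
    set τ' : ℝ → ℝ := fun t => -ρ' (-t) with hτ'
    have hmap : MapsTo (fun s : ℝ => -s) (Icc (-1:ℝ) 1) (Icc (-1:ℝ) 1) := by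
      intro s hs; simp only [mem_Icc] at hs ⊢; constructor <;> linarith
    have hd2 : ∀ t ∈ Icc (-1:ℝ) 1, HasDerivWithinAt τ (τ' t) (Icc (-1:ℝ) 1) t := by
      intro t ht
      have hneg : HasDerivWithinAt (fun s : ℝ => -s) (-1) (Icc (-1:ℝ) 1) t :=
        (hasDerivAt_neg t).hasDerivWithinAt
      have := HasDerivWithinAt.comp t (hd (-t) (hmap ht)) hneg hmap
      simpa [hτ, hτ', Function.comp_def, mul_comm] using this
    have hb2 : ∀ t ∈ Icc (-1:ℝ) 1, |τ' t| ≤ C₁ * |τ t| := by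
      intro t ht
      simpa [hτ, hτ'] using hb (-t) (hmap ht)
    have hx' : -x ∈ Icc (-1:ℝ) 1 := hmap hx
    have hy' : -y ∈ Icc (-1:ℝ) 1 := hmap hy
    have H := gronwall_right hC hd2 hb2 hx' hy' (by linarith)
    simpa [hτ, neg_neg, show -y - -x = x - y by ring] using H

lemma ftc_icc {w ρ : ℝ → ℝ}
    (hw : ∀ x ∈ Icc (-1:ℝ) 1, HasDerivWithinAt w (ρ x) (Icc (-1:ℝ) 1) x)
    (hρ : ContinuousOn ρ (Icc (-1:ℝ) 1)) {s t : ℝ}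
    (hs : s ∈ Icc (-1:ℝ) 1) (ht : t ∈ Icc (-1:ℝ) 1) (hst : s ≤ t) :
    ∫ y in s..t, ρ y = w t - w s := by
  have hsub : Icc s t ⊆ Icc (-1:ℝ) 1 := Icc_subset_Icc hs.1 ht.2
  apply intervalIntegral.integral_eq_sub_of_hasDeriv_right_of_le hst
  · exact fun x hx => ((hw x (hsub hx)).continuousWithinAt).mono hsub
  · intro x hx
    have hxI : x ∈ Icc (-1:ℝ) 1 := hsub ⟨hx.1.le, hx.2.le⟩
    have : HasDerivAt w (ρ x) x :=
      (hw x hxI).hasDerivAt (Icc_mem_nhds (lt_of_le_of_lt hs.1 hx.1) (lt_of_lt_of_le hx.2 ht.2))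
    exact this.hasDerivWithinAt
  · exact (hρ.mono hsub).intervalIntegrable_of_Icc hst

lemma int_exp_lin {A B : ℝ} (hB : B ≠ 0) (a b : ℝ) :
    ∫ y in a..b, Real.exp (A + B * y) = (Real.exp (A + B * b) - Real.exp (A + B * a)) / B := by
  have hder : ∀ y ∈ uIcc a b, HasDerivAt (fun y => Real.exp (A + B * y) / B)
      (Real.exp (A + B * y)) y := by
    intro y _
    have h1 : HasDerivAt (fun y : ℝ => A + B * y) B y := by
      simpa using ((hasDerivAt_id y).const_mul B).const_add A
    have h2 := (h1.exp).div_const B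
    simpa [mul_div_assoc, mul_div_cancel_right₀, hB] using h2
  have hint : IntervalIntegrable (fun y => Real.exp (A + B * y)) MeasureTheory.volume a b :=
    (Real.continuous_exp.comp (by continuity)).intervalIntegrable a b
  rw [intervalIntegral.integral_eq_sub_of_hasDerivAt hder hint]
  ring

lemma avg_bound {ρ : ℝ → ℝ} {C₁ ξ : ℝ} (hC : 0 ≤ C₁) (hξ : ξ ∈ Icc (-1:ℝ) 1)
    (hρ : ContinuousOn ρ (Icc (-1:ℝ) 1)) (hρξ : 0 ≤ ρ ξ)
    (hG : ∀ x ∈ Icc (-1:ℝ) 1, ∀ y ∈ Icc (-1:ℝ) 1, ρ y ≤ ρ x * Real.exp (C₁ * |y - x|)) :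
    2 * ρ ξ ≤ (1 + 2 * C₁) * ∫ y in (-1:ℝ)..1, ρ y := by
  rcases eq_or_lt_of_le hC with hC0 | hCpos
  · -- C₁ = 0 : ρ is constant on Icc
    have hconst : ∀ y ∈ Icc (-1:ℝ) 1, ρ y = ρ ξ := by
      intro y hy
      have h1 := hG ξ hξ y hy
      have h2 := hG y hy ξ hξ
      rw [← hC0] at h1 h2
      simp only [zero_mul, Real.exp_zero, mul_one] at h1 h2
      linarith
    have : ∫ y in (-1:ℝ)..1, ρ y = 2 * ρ ξ := by
      rw [intervalIntegral.integral_congr (g := fun _ => ρ ξ)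
        (fun y hy => hconst y (by rwa [uIcc_of_le (by norm_num : (-1:ℝ) ≤ 1)] at hy))]
      simp only [intervalIntegral.integral_const, smul_eq_mul]
      ring
    rw [this, ← hC0]
    linarith
  · -- C₁ > 0
    set f : ℝ → ℝ := fun y => Real.exp (-C₁ * |y - ξ|) with hf
    have hfc : Continuous f :=
      Real.continuous_exp.comp (continuous_const.mul ((continuous_id.sub continuous_const).abs))
    have hptw : ∀ y ∈ Icc (-1:ℝ) 1, ρ ξ * f y ≤ ρ y := by
      intro y hy
      have h := hG y hy ξ hξ
      have hE : (0:ℝ) < Real.exp (C₁ * |ξ - y|) := Real.exp_pos _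
      have : ρ ξ / Real.exp (C₁ * |ξ - y|) ≤ ρ y := (div_le_iff₀ hE).2 h
      calc ρ ξ * f y = ρ ξ / Real.exp (C₁ * |ξ - y|) := by
            rw [hf]
            simp only []
            rw [abs_sub_comm y ξ, div_eq_mul_inv, ← Real.exp_neg]
            ring_nf
        _ ≤ ρ y := this
    have hintf : ∀ a b : ℝ, IntervalIntegrable (fun y => ρ ξ * f y) MeasureTheory.volume a b :=
      fun a b => ((continuous_const.mul hfc).intervalIntegrable a b)
    have hmono : ∫ y in (-1:ℝ)..1, ρ ξ * f y ≤ ∫ y in (-1:ℝ)..1, ρ y := by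
      apply intervalIntegral.integral_mono_on (by norm_num) (hintf _ _)
        (hρ.intervalIntegrable_of_Icc (by norm_num))
      exact hptw
    -- compute ∫ f
    have hL : ∫ y in (-1:ℝ)..ξ, ρ ξ * f y
        = ρ ξ * ((1 - Real.exp (-C₁ * ξ - C₁)) / C₁) := by
      rw [intervalIntegral.integral_const_mul]
      congr 1
      have : ∫ y in (-1:ℝ)..ξ, f y = ∫ y in (-1:ℝ)..ξ, Real.exp ((-C₁ * ξ) + C₁ * y) := by
        apply intervalIntegral.integral_congr
        intro y hy
        rw [uIcc_of_le hξ.1] at hy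
        rw [hf]
        simp only []
        congr 1
        rw [abs_of_nonpos (by linarith [hy.2] : y - ξ ≤ 0)]
        ring
      rw [this, int_exp_lin (ne_of_gt hCpos)]
      rw [show -C₁ * ξ + C₁ * ξ = 0 by ring, Real.exp_zero]
      congr 2
      ring
    have hR : ∫ y in ξ..(1:ℝ), ρ ξ * f y
        = ρ ξ * ((1 - Real.exp (C₁ * ξ - C₁)) / C₁) := by
      rw [intervalIntegral.integral_const_mul]
      congr 1
      have : ∫ y in ξ..(1:ℝ), f y = ∫ y in ξ..(1:ℝ), Real.exp ((C₁ * ξ) + (-C₁) * y) := by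
        apply intervalIntegral.integral_congr
        intro y hy
        rw [uIcc_of_le hξ.2] at hy
        rw [hf]
        simp only []
        congr 1
        rw [abs_of_nonneg (by linarith [hy.1] : 0 ≤ y - ξ)]
        ring
      rw [this, int_exp_lin (by linarith : (-C₁) ≠ 0)]
      rw [show C₁ * ξ + -C₁ * ξ = 0 by ring, Real.exp_zero,
        show C₁ * ξ + -C₁ * 1 = C₁ * ξ - C₁ by ring, div_neg, ← neg_div, neg_sub]
    have hsplit : ∫ y in (-1:ℝ)..1, ρ ξ * f y
        = (∫ y in (-1:ℝ)..ξ, ρ ξ * f y) + ∫ y in ξ..(1:ℝ), ρ ξ * f y :=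
      (intervalIntegral.integral_add_adjacent_intervals (hintf _ _) (hintf _ _)).symm
    -- lower bound for the sum
    have hsum : ρ ξ * (2 / (1 + 2 * C₁)) ≤ ∫ y in (-1:ℝ)..1, ρ ξ * f y := by
      rw [hsplit, hL, hR]
      have hu : Real.exp (-C₁ * ξ - C₁) ≤ 1 := by
        rw [Real.exp_le_one_iff]; nlinarith [hξ.1, hξ.2]
      have hv : Real.exp (C₁ * ξ - C₁) ≤ 1 := by
        rw [Real.exp_le_one_iff]; nlinarith [hξ.1, hξ.2]
      have huv : Real.exp (-C₁ * ξ - C₁) * Real.exp (C₁ * ξ - C₁) = Real.exp (-(2*C₁)) := by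
        rw [← Real.exp_add]; congr 1; ring
      have hkey : 2 / (1 + 2 * C₁) ≤ (1 - Real.exp (-C₁ * ξ - C₁)) / C₁
          + (1 - Real.exp (C₁ * ξ - C₁)) / C₁ := by
        have h1e : 1 + 2 * C₁ ≤ Real.exp (2 * C₁) := by
          have := Real.add_one_le_exp (2 * C₁); linarith
        have hE : Real.exp (2 * C₁) * Real.exp (-(2 * C₁)) = 1 := by
          rw [← Real.exp_add]; simp
        have hEpos := Real.exp_pos (-(2*C₁))
        have hEpos2 := Real.exp_pos (2*C₁)
        have hcomb : Real.exp (-C₁ * ξ - C₁) + Real.exp (C₁ * ξ - C₁) ≤ 1 + Real.exp (-(2*C₁)) := by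
          nlinarith [mul_nonneg (sub_nonneg.2 hu) (sub_nonneg.2 hv)]
        rw [← add_div, div_le_div_iff₀ (by linarith) hCpos]
        nlinarith
      calc ρ ξ * (2 / (1 + 2 * C₁)) ≤ ρ ξ * ((1 - Real.exp (-C₁ * ξ - C₁)) / C₁
            + (1 - Real.exp (C₁ * ξ - C₁)) / C₁) := by
            apply mul_le_mul_of_nonneg_left hkey hρξ
        _ = ρ ξ * ((1 - Real.exp (-C₁ * ξ - C₁)) / C₁)
            + ρ ξ * ((1 - Real.exp (C₁ * ξ - C₁)) / C₁) := by ring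
    have hfinal : ρ ξ * (2 / (1 + 2 * C₁)) ≤ ∫ y in (-1:ℝ)..1, ρ y := le_trans hsum hmono
    have h2C : (0:ℝ) < 1 + 2 * C₁ := by linarith
    rw [mul_div_assoc'] at hfinal
    calc 2 * ρ ξ = (1 + 2 * C₁) * (ρ ξ * 2 / (1 + 2 * C₁)) := by field_simp
      _ ≤ (1 + 2 * C₁) * ∫ y in (-1:ℝ)..1, ρ y :=
          mul_le_mul_of_nonneg_left hfinal (by linarith)

lemma image_Icc_eq {f : ℝ → ℝ} (hmono : StrictMonoOn f (Icc (-1:ℝ) 1))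
    (hcont : ContinuousOn f (Icc (-1:ℝ) 1)) {p q : ℝ}
    (hp : -1 ≤ p) (hq : q ≤ 1) (hpq : p ≤ q) : f '' Icc p q = Icc (f p) (f q) := by
  have hsub : Icc p q ⊆ Icc (-1:ℝ) 1 := Icc_subset_Icc hp hq
  apply Subset.antisymm
  · rintro x ⟨t, ht, rfl⟩
    exact ⟨hmono.monotoneOn (hsub ⟨le_refl p, hpq⟩) (hsub ht) ht.1,
      hmono.monotoneOn (hsub ht) (hsub ⟨hpq, le_refl q⟩) ht.2⟩
  · exact intermediate_value_Icc hpq (hcont.mono hsub)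

lemma endpoints_mono {f : ℝ → ℝ} {a b : ℝ} (hm : StrictMonoOn f (Icc (-1:ℝ) 1))
    (him : f '' Icc (-1:ℝ) 1 = Icc a b) (hab : a ≤ b) : f (-1) = a ∧ f 1 = b := by
  have hm1 : (-1:ℝ) ∈ Icc (-1:ℝ) 1 := by norm_num
  have h1 : (1:ℝ) ∈ Icc (-1:ℝ) 1 := by norm_num
  have hfm1 : f (-1) ∈ Icc a b := him ▸ mem_image_of_mem f hm1
  have hf1 : f 1 ∈ Icc a b := him ▸ mem_image_of_mem f h1
  have ha : a ∈ f '' Icc (-1:ℝ) 1 := by rw [him]; exact ⟨le_refl a, hab⟩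
  have hb : b ∈ f '' Icc (-1:ℝ) 1 := by rw [him]; exact ⟨hab, le_refl b⟩
  obtain ⟨x, hx, hxa⟩ := ha
  obtain ⟨y, hy, hyb⟩ := hb
  constructor
  · exact le_antisymm (hxa ▸ hm.monotoneOn hm1 hx hx.1) hfm1.1
  · exact le_antisymm hf1.2 (hyb ▸ hm.monotoneOn hy h1 hy.2)

lemma endpoints_anti {f : ℝ → ℝ} {a b : ℝ} (hm : StrictAntiOn f (Icc (-1:ℝ) 1))
    (him : f '' Icc (-1:ℝ) 1 = Icc a b) (hab : a ≤ b) : f (-1) = b ∧ f 1 = a := by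
  have hm1 : (-1:ℝ) ∈ Icc (-1:ℝ) 1 := by norm_num
  have h1 : (1:ℝ) ∈ Icc (-1:ℝ) 1 := by norm_num
  have hfm1 : f (-1) ∈ Icc a b := him ▸ mem_image_of_mem f hm1
  have hf1 : f 1 ∈ Icc a b := him ▸ mem_image_of_mem f h1
  have ha : a ∈ f '' Icc (-1:ℝ) 1 := by rw [him]; exact ⟨le_refl a, hab⟩
  have hb : b ∈ f '' Icc (-1:ℝ) 1 := by rw [him]; exact ⟨hab, le_refl b⟩
  obtain ⟨x, hx, hxa⟩ := ha
  obtain ⟨y, hy, hyb⟩ := hb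
  constructor
  · exact le_antisymm hfm1.2 (hyb ▸ hm.antitoneOn hm1 hy hy.1)
  · exact le_antisymm (hxa ▸ hm.antitoneOn hx h1 hx.2) hf1.1

lemma neg_image_Icc (a b : ℝ) : (fun x : ℝ => -x) '' Icc (-b) (-a) = Icc a b := by
  ext y
  constructor
  · rintro ⟨x, hx, rfl⟩
    simp only [mem_Icc] at hx ⊢
    constructor <;> linarith [hx.1, hx.2]
  · intro hy
    exact ⟨-y, ⟨by linarith [hy.2], by linarith [hy.1]⟩, neg_neg y⟩

set_option maxHeartbeats 1000000 in
lemma core_mono {w ρ : ℝ → ℝ} {C₁ Ξf Ξg lamg p q A B : ℝ}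
    (hC : 0 ≤ C₁) (hlam : 0 < lamg)
    (hp : -1 ≤ p) (hq : q ≤ 1) (hpq : p < q)
    (hw : ∀ x ∈ Icc (-1:ℝ) 1, HasDerivWithinAt w (ρ x) (Icc (-1:ℝ) 1) x)
    (hρc : ContinuousOn ρ (Icc (-1:ℝ) 1))
    (hρ0 : ∀ x ∈ Icc (-1:ℝ) 1, 0 ≤ ρ x)
    (hG : ∀ x ∈ Icc (-1:ℝ) 1, ∀ y ∈ Icc (-1:ℝ) 1, ρ y ≤ ρ x * Real.exp (C₁ * |y - x|))
    (hmono : StrictMonoOn w (Icc (-1:ℝ) 1))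
    (hA : w (-1) = A) (hB : w 1 = B) (hA1 : -1 ≤ A) (hB1 : B ≤ 1)
    (hqp : q - p ≤ 2 / lamg)
    (hspF : ∀ σ ∈ ({-1, 1} : Set ℝ), σ ∉ Icc A B → B - A ≤ Ξf * Metric.infDist σ (Set.Ioo A B))
    (hspG : ∀ σ ∈ ({-1, 1} : Set ℝ), σ ∉ Icc p q → q - p ≤ Ξg * Metric.infDist σ (Set.Ioo p q)) :
    ∀ σ ∈ ({-1, 1} : Set ℝ), σ ∉ Icc (w p) (w q) →
      w q - w p ≤ (1 + 2 * C₁) * max (Real.exp (2 * C₁) * Ξg) (Ξf / lamg) *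
        Metric.infDist σ (Set.Ioo (w p) (w q)) := by
  intro σ hσ hσni
  have hm1 : (-1:ℝ) ∈ Icc (-1:ℝ) 1 := by norm_num
  have h1 : (1:ℝ) ∈ Icc (-1:ℝ) 1 := by norm_num
  have hpI : p ∈ Icc (-1:ℝ) 1 := ⟨hp, le_trans hpq.le hq⟩
  have hqI : q ∈ Icc (-1:ℝ) 1 := ⟨le_trans hp hpq.le, hq⟩
  have hAB : A < B := by rw [← hA, ← hB]; exact hmono hm1 h1 (by norm_num)
  have hwpq : w p < w q := hmono hpI hqI hpq
  have hApw : A ≤ w p := by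
    rw [← hA]
    rcases eq_or_lt_of_le hp with h | h
    · rw [h]
    · exact (hmono hm1 hpI h).le
  have hwqB : w q ≤ B := by
    rw [← hB]
    rcases eq_or_lt_of_le hq with h | h
    · rw [h]
    · exact (hmono hqI h1 h).le
  -- max point of ρ
  obtain ⟨ξ, hξI, hξmax⟩ := IsCompact.exists_isMaxOn isCompact_Icc
    (nonempty_Icc.2 (by norm_num)) hρc
  have hξm : ∀ y ∈ Icc (-1:ℝ) 1, ρ y ≤ ρ ξ := fun y hy => hξmax hy
  have hρξ0 : 0 ≤ ρ ξ := hρ0 ξ hξI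
  -- length bound
  have hlen : w q - w p ≤ (q - p) * ρ ξ := by
    rw [← ftc_icc hw hρc hpI hqI hpq.le]
    calc ∫ y in p..q, ρ y ≤ ∫ y in p..q, ρ ξ := by
          apply intervalIntegral.integral_mono_on hpq.le
            (hρc.mono (Icc_subset_Icc hpI.1 hqI.2) |>.intervalIntegrable_of_Icc hpq.le)
            (intervalIntegrable_const)
          exact fun y hy => hξm y ⟨le_trans hpI.1 hy.1, le_trans hy.2 hqI.2⟩
      _ = (q - p) * ρ ξ := by rw [intervalIntegral.integral_const, smul_eq_mul]
  have hexp2 : (0:ℝ) < Real.exp (2 * C₁) := Real.exp_pos _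
  set M := max (Real.exp (2 * C₁) * Ξg) (Ξf / lamg) with hM
  by_cases hσAB : σ ∈ Icc A B
  · -- Case B : σ is an endpoint of [A, B]
    have hlow : ∀ y ∈ Icc (-1:ℝ) 1, ρ ξ * Real.exp (-(2*C₁)) ≤ ρ y := by
      intro y hy
      have h := hG y hy ξ hξI
      have habs : |ξ - y| ≤ 2 := by
        rw [abs_le]; constructor <;> [linarith [hξI.1, hy.2]; linarith [hξI.2, hy.1]]
      have h2 : ρ y * Real.exp (C₁ * |ξ - y|) ≤ ρ y * Real.exp (2 * C₁) :=
        mul_le_mul_of_nonneg_left (Real.exp_le_exp.2 (by nlinarith)) (hρ0 y hy)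
      have h3 : ρ ξ ≤ ρ y * Real.exp (2 * C₁) := le_trans h h2
      rw [Real.exp_neg, ← div_eq_mul_inv, div_le_iff₀ hexp2]
      linarith
    have hEE : Real.exp (2*C₁) * Real.exp (-(2*C₁)) = 1 := by
      rw [← Real.exp_add]; simp
    rcases hσ with hσm | hσm
    · -- σ = -1, so A = -1
      rw [hσm] at hσAB hσni ⊢
      have hAeq : A = -1 := le_antisymm (by linarith [hσAB.1]) hA1
      have hw1A : w (-1) = -1 := by rw [hA, hAeq]
      have hwp1 : -1 < w p := by
        rcases eq_or_lt_of_le (show (-1:ℝ) ≤ w p by rw [← hAeq]; exact hApw) with h | h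
        · exact absurd ⟨h.ge, by linarith⟩ hσni
        · exact h
      have hp1 : -1 < p := by
        by_contra h
        push_neg at h
        have hpe : p = -1 := le_antisymm h hp
        rw [hpe, hw1A] at hwp1; exact lt_irrefl _ hwp1
      have hnm : (-1:ℝ) ∉ Icc p q := fun h => absurd h.1 (not_le.2 hp1)
      have hsp := hspG (-1) (by left; rfl) hnm
      rw [infDist_Ioo_left hpq (by linarith)] at hsp
      have hΞg : 0 < Ξg := by nlinarith
      have hD : Metric.infDist (-1:ℝ) (Set.Ioo (w p) (w q)) = w p - (-1) :=
        infDist_Ioo_left hwpq (by linarith)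
      have hseg : w p - w (-1) = ∫ y in (-1:ℝ)..p, ρ y := (ftc_icc hw hρc hm1 hpI hp).symm
      have hlow2 : (p - (-1)) * (ρ ξ * Real.exp (-(2*C₁))) ≤ w p - w (-1) := by
        rw [hseg]
        calc (p - (-1)) * (ρ ξ * Real.exp (-(2*C₁)))
            = ∫ _ in (-1:ℝ)..p, ρ ξ * Real.exp (-(2*C₁)) := by
              rw [intervalIntegral.integral_const, smul_eq_mul]
          _ ≤ ∫ y in (-1:ℝ)..p, ρ y := by
              apply intervalIntegral.integral_mono_on hp intervalIntegrable_const
                ((hρc.mono (Icc_subset_Icc hm1.1 hpI.2)).intervalIntegrable_of_Icc hp)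
              exact fun y hy => hlow y ⟨hy.1, le_trans hy.2 hpI.2⟩
      have hDlow : (p + 1) * (ρ ξ * Real.exp (-(2*C₁))) ≤ w p + 1 := by
        rw [hw1A] at hlow2; linarith [hlow2]
      have hMge : Real.exp (2*C₁) * Ξg ≤ M := le_max_left _ _
      have hDpos : (0:ℝ) ≤ w p + 1 := by linarith
      rw [hD]
      have hchain : w q - w p ≤ (Real.exp (2*C₁) * Ξg) * (w p + 1) := by
        calc w q - w p ≤ (q - p) * ρ ξ := hlen
          _ ≤ (Ξg * (p + 1)) * ρ ξ := by
              apply mul_le_mul_of_nonneg_right _ hρξ0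
              linarith
          _ = (Real.exp (2*C₁) * Ξg) * ((p + 1) * (ρ ξ * Real.exp (-(2*C₁)))) := by
              linear_combination (-(Ξg * (p + 1) * ρ ξ)) * hEE
          _ ≤ (Real.exp (2*C₁) * Ξg) * (w p + 1) :=
              mul_le_mul_of_nonneg_left hDlow (by positivity)
      have : (Real.exp (2*C₁) * Ξg) * (w p + 1) ≤ (1 + 2*C₁) * M * (w p - (-1)) := by
        have h1 : (Real.exp (2*C₁) * Ξg) * (w p + 1) ≤ M * (w p + 1) :=
          mul_le_mul_of_nonneg_right hMge hDpos
        have h2 : (0:ℝ) ≤ M * (w p + 1) :=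
          le_trans (by positivity) h1
        nlinarith
      linarith
    · -- σ = 1, so B = 1
      rw [hσm] at hσAB hσni ⊢
      have hBeq : B = 1 := le_antisymm hB1 (by linarith [hσAB.2])
      have hw1B : w 1 = 1 := by rw [hB, hBeq]
      have hwq1 : w q < 1 := by
        rcases eq_or_lt_of_le (show w q ≤ (1:ℝ) by rw [← hBeq]; exact hwqB) with h | h
        · exact absurd ⟨by linarith, h.ge⟩ hσni
        · exact h
      have hq1 : q < 1 := by
        by_contra h
        push_neg at h
        have hqe : q = 1 := le_antisymm hq h
        rw [hqe, hw1B] at hwq1; exact lt_irrefl _ hwq1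
      have hnm : (1:ℝ) ∉ Icc p q := fun h => absurd h.2 (not_le.2 hq1)
      have hsp := hspG 1 (by right; rfl) hnm
      rw [infDist_Ioo_right hpq (by linarith)] at hsp
      have hΞg : 0 < Ξg := by nlinarith
      have hD : Metric.infDist (1:ℝ) (Set.Ioo (w p) (w q)) = 1 - w q :=
        infDist_Ioo_right hwpq (by linarith)
      have hseg : w 1 - w q = ∫ y in q..(1:ℝ), ρ y := (ftc_icc hw hρc hqI h1 hq).symm
      have hlow2 : (1 - q) * (ρ ξ * Real.exp (-(2*C₁))) ≤ w 1 - w q := by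
        rw [hseg]
        calc (1 - q) * (ρ ξ * Real.exp (-(2*C₁)))
            = ∫ _ in q..(1:ℝ), ρ ξ * Real.exp (-(2*C₁)) := by
              rw [intervalIntegral.integral_const, smul_eq_mul]
          _ ≤ ∫ y in q..(1:ℝ), ρ y := by
              apply intervalIntegral.integral_mono_on hq intervalIntegrable_const
                ((hρc.mono (Icc_subset_Icc hqI.1 h1.2)).intervalIntegrable_of_Icc hq)
              exact fun y hy => hlow y ⟨le_trans hqI.1 hy.1, hy.2⟩
      have hDlow : (1 - q) * (ρ ξ * Real.exp (-(2*C₁))) ≤ 1 - w q := by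
        rw [hw1B] at hlow2; linarith [hlow2]
      have hMge : Real.exp (2*C₁) * Ξg ≤ M := le_max_left _ _
      have hDpos : (0:ℝ) ≤ 1 - w q := by linarith
      rw [hD]
      have hchain : w q - w p ≤ (Real.exp (2*C₁) * Ξg) * (1 - w q) := by
        calc w q - w p ≤ (q - p) * ρ ξ := hlen
          _ ≤ (Ξg * (1 - q)) * ρ ξ := by
              apply mul_le_mul_of_nonneg_right _ hρξ0
              linarith
          _ = (Real.exp (2*C₁) * Ξg) * ((1 - q) * (ρ ξ * Real.exp (-(2*C₁)))) := by
              linear_combination (-(Ξg * (1 - q) * ρ ξ)) * hEE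
          _ ≤ (Real.exp (2*C₁) * Ξg) * (1 - w q) :=
              mul_le_mul_of_nonneg_left hDlow (by positivity)
      have : (Real.exp (2*C₁) * Ξg) * (1 - w q) ≤ (1 + 2*C₁) * M * (1 - w q) := by
        have h1 : (Real.exp (2*C₁) * Ξg) * (1 - w q) ≤ M * (1 - w q) :=
          mul_le_mul_of_nonneg_right hMge hDpos
        have h2 : (0:ℝ) ≤ M * (1 - w q) := le_trans (by positivity) h1
        nlinarith
      linarith
  · -- Case A : σ outside [A, B]
    have hsp := hspF σ hσ hσAB
    have hDf : ∃ D : ℝ, Metric.infDist σ (Set.Ioo A B) = D ∧ 0 < D := by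
      rcases hσ with hσm | hσm
      · subst hσm
        have hAgt : -1 < A := by
          rcases eq_or_lt_of_le hA1 with h | h
          · exact absurd ⟨h.ge, by linarith⟩ hσAB
          · exact h
        exact ⟨A - (-1), infDist_Ioo_left hAB (by linarith), by linarith⟩
      · subst hσm
        have hBlt : B < 1 := by
          rcases eq_or_lt_of_le hB1 with h | h
          · exact absurd ⟨by linarith, h.ge⟩ hσAB
          · exact h
        exact ⟨1 - B, infDist_Ioo_right hAB (by linarith), by linarith⟩
    obtain ⟨DAB, hDAB, hDABpos⟩ := hDf
    rw [hDAB] at hsp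
    have hΞf : 0 < Ξf := by nlinarith
    have hsubset : Set.Ioo (w p) (w q) ⊆ Set.Ioo A B :=
      fun x hx => ⟨lt_of_le_of_lt hApw hx.1, lt_of_lt_of_le hx.2 hwqB⟩
    have hDle : DAB ≤ Metric.infDist σ (Set.Ioo (w p) (w q)) := by
      rw [← hDAB]
      exact Metric.infDist_le_infDist_of_subset hsubset (nonempty_Ioo.2 hwpq)
    have hDnn : 0 ≤ Metric.infDist σ (Set.Ioo (w p) (w q)) := Metric.infDist_nonneg
    have havg := avg_bound hC hξI hρc hρξ0 hG
    rw [ftc_icc hw hρc hm1 h1 (by norm_num), hA, hB] at havg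
    have hMge : Ξf / lamg ≤ M := le_max_right _ _
    set D := Metric.infDist σ (Set.Ioo (w p) (w q))
    calc w q - w p ≤ (q - p) * ρ ξ := hlen
      _ ≤ (2 / lamg) * ρ ξ := mul_le_mul_of_nonneg_right hqp hρξ0
      _ = (1 / lamg) * (2 * ρ ξ) := by ring
      _ ≤ (1 / lamg) * ((1 + 2*C₁) * (B - A)) := by
          apply mul_le_mul_of_nonneg_left havg (by positivity)
      _ ≤ (1 / lamg) * ((1 + 2*C₁) * (Ξf * DAB)) := by
          apply mul_le_mul_of_nonneg_left _ (by positivity)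
          nlinarith
      _ = (1 + 2*C₁) * (Ξf / lamg) * DAB := by field_simp
      _ ≤ (1 + 2*C₁) * (Ξf / lamg) * D := by
          apply mul_le_mul_of_nonneg_left hDle (by positivity)
      _ ≤ (1 + 2*C₁) * M * D := by
          have : (Ξf / lamg) * D ≤ M * D := mul_le_mul_of_nonneg_right hMge hDnn
          nlinarith

end PSC17helpers


set_option maxHeartbeats 1000000 in
/-- The partition spacing condition (P) is preserved under composition:
if the inverse branches `v^f_φ` of `f` have distortion bound `C₁` and spacing constant
`Ξ_f`, and the inverse branches `v^g_γ` of `g` satisfy `|(v^g_γ)'| ≤ 1/λ_g` and spacing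
constant `Ξ_g`, then the branch intervals `O_{φγ} = interior (v^f_φ(v^g_γ([-1,1])))` of the
composition satisfy the spacing bound with constant
`(1 + 2C₁) max(e^{2C₁} Ξ_g, Ξ_f/λ_g)`. -/
theorem partition_spacing_composition
    {Φ Γ : Type} [Countable Φ] [Countable Γ]
    (C₁ lamg Ξf Ξg : ℝ) (hC₁ : 0 ≤ C₁) (hlamg : 0 < lamg)
    (aF bF : Φ → ℝ) (haF : ∀ φ, -1 ≤ aF φ) (hbF : ∀ φ, bF φ ≤ 1) (habF : ∀ φ, aF φ < bF φ)
    (hdisjF : ∀ φ φ', φ ≠ φ' → Disjoint (Set.Ioo (aF φ) (bF φ)) (Set.Ioo (aF φ') (bF φ')))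
    (aG bG : Γ → ℝ) (haG : ∀ γ, -1 ≤ aG γ) (hbG : ∀ γ, bG γ ≤ 1) (habG : ∀ γ, aG γ < bG γ)
    (hdisjG : ∀ γ γ', γ ≠ γ' → Disjoint (Set.Ioo (aG γ) (bG γ)) (Set.Ioo (aG γ') (bG γ')))
    (vF : Φ → ℝ → ℝ) (vG : Γ → ℝ → ℝ)
    (hregF : ∀ φ, ContDiffOn ℝ 2 (vF φ) (Set.Icc (-1) 1))
    (hmonoF : ∀ φ, StrictMonoOn (vF φ) (Set.Icc (-1) 1) ∨ StrictAntiOn (vF φ) (Set.Icc (-1) 1))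
    (himF : ∀ φ, vF φ '' Set.Icc (-1) 1 = Set.Icc (aF φ) (bF φ))
    (hdistF : ∀ φ, ∀ x ∈ Set.Icc (-1 : ℝ) 1,
      |iteratedDerivWithin 2 (vF φ) (Set.Icc (-1) 1) x| ≤
        C₁ * |derivWithin (vF φ) (Set.Icc (-1) 1) x|)
    (hregG : ∀ γ, ContDiffOn ℝ 1 (vG γ) (Set.Icc (-1) 1))
    (hmonoG : ∀ γ, StrictMonoOn (vG γ) (Set.Icc (-1) 1) ∨ StrictAntiOn (vG γ) (Set.Icc (-1) 1))
    (himG : ∀ γ, vG γ '' Set.Icc (-1) 1 = Set.Icc (aG γ) (bG γ))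
    (hderG : ∀ γ, ∀ x ∈ Set.Icc (-1 : ℝ) 1,
      |derivWithin (vG γ) (Set.Icc (-1) 1) x| ≤ 1 / lamg)
    (hspF : ∀ φ, ∀ σ ∈ ({-1, 1} : Set ℝ), σ ∉ Set.Icc (aF φ) (bF φ) →
      bF φ - aF φ ≤ Ξf * Metric.infDist σ (Set.Ioo (aF φ) (bF φ)))
    (hspG : ∀ γ, ∀ σ ∈ ({-1, 1} : Set ℝ), σ ∉ Set.Icc (aG γ) (bG γ) →
      bG γ - aG γ ≤ Ξg * Metric.infDist σ (Set.Ioo (aG γ) (bG γ))) :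
    ∀ (φ : Φ) (γ : Γ), ∀ σ ∈ ({-1, 1} : Set ℝ),
      σ ∉ closure (interior (vF φ '' (vG γ '' Set.Icc (-1 : ℝ) 1))) →
      (MeasureTheory.volume (interior (vF φ '' (vG γ '' Set.Icc (-1 : ℝ) 1)))).toReal ≤
        (1 + 2 * C₁) * max (Real.exp (2 * C₁) * Ξg) (Ξf / lamg) *
          Metric.infDist σ (interior (vF φ '' (vG γ '' Set.Icc (-1 : ℝ) 1))) := by
  intro φ γ σ hσ hσcl
  have hm1 : (-1:ℝ) ∈ Icc (-1:ℝ) 1 := by norm_num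
  have h1 : (1:ℝ) ∈ Icc (-1:ℝ) 1 := by norm_num
  have uD : UniqueDiffOn ℝ (Icc (-1:ℝ) 1) := uniqueDiffOn_Icc (by norm_num)
  -- length of the G-interval
  have hlenG : bG γ - aG γ ≤ 2 / lamg := by
    have hdG : DifferentiableOn ℝ (vG γ) (Icc (-1:ℝ) 1) :=
      (hregG γ).differentiableOn one_ne_zero
    have hb : ∀ x ∈ Icc (-1:ℝ) 1, ‖derivWithin (vG γ) (Icc (-1:ℝ) 1) x‖ ≤ 1 / lamg := by
      intro x hx; rw [Real.norm_eq_abs]; exact hderG γ x hx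
    have hmvt := (convex_Icc (-1:ℝ) 1).norm_image_sub_le_of_norm_derivWithin_le hdG hb hm1 h1
    rw [Real.norm_eq_abs, Real.norm_eq_abs] at hmvt
    have h2 : |vG γ 1 - vG γ (-1)| ≤ 2 / lamg := by
      have : |(1:ℝ) - (-1)| = 2 := by norm_num
      rw [this] at hmvt
      calc |vG γ 1 - vG γ (-1)| ≤ 1 / lamg * 2 := hmvt
        _ = 2 / lamg := by ring
    rcases hmonoG γ with hg | hg
    · obtain ⟨he1, he2⟩ := endpoints_mono hg (himG γ) (habG γ).le
      rw [← he1, ← he2]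
      exact le_trans (le_abs_self _) h2
    · obtain ⟨he1, he2⟩ := endpoints_anti hg (himG γ) (habG γ).le
      rw [← he1, ← he2]
      calc vG γ (-1) - vG γ 1 ≤ |vG γ 1 - vG γ (-1)| := by
            rw [abs_sub_comm]; exact le_abs_self _
        _ ≤ 2 / lamg := h2
  -- F-branch derivative data
  set ρF : ℝ → ℝ := derivWithin (vF φ) (Icc (-1:ℝ) 1) with hρF
  have hρF1 : ContDiffOn ℝ 1 ρF (Icc (-1:ℝ) 1) :=
    (hregF φ).derivWithin uD (by norm_num)
  have hρFc : ContinuousOn ρF (Icc (-1:ℝ) 1) := hρF1.continuousOn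
  have hρFd : DifferentiableOn ℝ ρF (Icc (-1:ℝ) 1) := hρF1.differentiableOn one_ne_zero
  have hwd : ∀ x ∈ Icc (-1:ℝ) 1, HasDerivWithinAt (vF φ) (ρF x) (Icc (-1:ℝ) 1) x :=
    fun x hx => ((hregF φ).differentiableOn (by norm_num) x hx).hasDerivWithinAt
  have hbF' : ∀ t ∈ Icc (-1:ℝ) 1, |derivWithin ρF (Icc (-1:ℝ) 1) t| ≤ C₁ * |ρF t| := by
    intro t ht
    have heq : iteratedDerivWithin 2 (vF φ) (Icc (-1:ℝ) 1) t
        = derivWithin ρF (Icc (-1:ℝ) 1) t := by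
      rw [show (2:ℕ) = 1 + 1 from rfl, iteratedDerivWithin_succ]
      apply derivWithin_congr
      · intro y hy
        exact congrFun iteratedDerivWithin_one y
      · exact congrFun iteratedDerivWithin_one t
    rw [← heq]
    exact hdistF φ t ht
  have hpair : ∀ x ∈ Icc (-1:ℝ) 1, ∀ y ∈ Icc (-1:ℝ) 1,
      |ρF y| ≤ |ρF x| * Real.exp (C₁ * |y - x|) := by
    intro x hx y hy
    exact gronwall_pair hC₁ (fun t ht => (hρFd t ht).hasDerivWithinAt) hbF' hx hy
  rcases hmonoF φ with hmF | hmF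
  · -- vF increasing
    set p := aG γ
    set q := bG γ
    have hp : -1 ≤ p := haG γ
    have hq : q ≤ 1 := hbG γ
    have hpq : p < q := habG γ
    obtain ⟨heA, heB⟩ := endpoints_mono hmF (himF φ) (habF φ).le
    have hρ0 : ∀ x ∈ Icc (-1:ℝ) 1, 0 ≤ ρF x :=
      fun x hx => deriv_nonneg_of_mono hx hmF.monotoneOn (hwd x hx)
    have hG : ∀ x ∈ Icc (-1:ℝ) 1, ∀ y ∈ Icc (-1:ℝ) 1,
        ρF y ≤ ρF x * Real.exp (C₁ * |y - x|) := by
      intro x hx y hy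
      have := hpair x hx y hy
      rwa [abs_of_nonneg (hρ0 y hy), abs_of_nonneg (hρ0 x hx)] at this
    have hwpq : vF φ p < vF φ q := hmF ⟨hp, le_trans hpq.le hq⟩ ⟨le_trans hp hpq.le, hq⟩ hpq
    have hS : vF φ '' (vG γ '' Icc (-1:ℝ) 1) = Icc (vF φ p) (vF φ q) := by
      rw [himG γ]
      exact image_Icc_eq hmF (hregF φ).continuousOn hp hq hpq.le
    rw [hS, interior_Icc] at hσcl ⊢
    rw [closure_Ioo (ne_of_lt hwpq)] at hσcl
    rw [Real.volume_Ioo, ENNReal.toReal_ofReal (by linarith)]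
    exact core_mono hC₁ hlamg hp hq hpq hwd hρFc hρ0 hG hmF heA heB (haF φ) (hbF φ)
      hlenG (hspF φ) (hspG γ) σ hσ hσcl
  · -- vF decreasing
    set w : ℝ → ℝ := fun x => vF φ (-x) with hwdef
    set ρ : ℝ → ℝ := fun x => -ρF (-x) with hρdef
    set p := -bG γ with hpdef
    set q := -aG γ with hqdef
    have hp : -1 ≤ p := by simp only [p, neg_le, neg_neg]; linarith [hbG γ]
    have hq : q ≤ 1 := by simp only [q]; linarith [haG γ]
    have hpq : p < q := by simp only [p, q]; linarith [habG γ]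
    have hmap : MapsTo (fun s : ℝ => -s) (Icc (-1:ℝ) 1) (Icc (-1:ℝ) 1) := by
      intro s hs; simp only [mem_Icc] at hs ⊢; constructor <;> linarith
    have hmW : StrictMonoOn w (Icc (-1:ℝ) 1) := by
      intro x hx y hy hxy
      exact hmF (hmap hy) (hmap hx) (by dsimp only; linarith)
    have hw : ∀ x ∈ Icc (-1:ℝ) 1, HasDerivWithinAt w (ρ x) (Icc (-1:ℝ) 1) x := by
      intro x hx
      have hneg : HasDerivWithinAt (fun s : ℝ => -s) (-1) (Icc (-1:ℝ) 1) x :=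
        (hasDerivAt_neg x).hasDerivWithinAt
      have := HasDerivWithinAt.comp x (hwd (-x) (hmap hx)) hneg hmap
      simpa [hwdef, hρdef, Function.comp_def, mul_comm] using this
    have hρc : ContinuousOn ρ (Icc (-1:ℝ) 1) := by
      apply ContinuousOn.neg
      exact hρFc.comp (continuous_neg.continuousOn) hmap
    have hρ0 : ∀ x ∈ Icc (-1:ℝ) 1, 0 ≤ ρ x :=
      fun x hx => deriv_nonneg_of_mono hx hmW.monotoneOn (hw x hx)
    have hnegabs : ∀ z ∈ Icc (-1:ℝ) 1, |ρF (-z)| = ρ z := by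
      intro z hz
      have h0 : 0 ≤ ρ z := hρ0 z hz
      have h2 : ρF (-z) ≤ 0 := by
        simp only [hρdef] at h0; linarith
      simp only [hρdef]
      rw [abs_of_nonpos h2]
    have hG : ∀ x ∈ Icc (-1:ℝ) 1, ∀ y ∈ Icc (-1:ℝ) 1,
        ρ y ≤ ρ x * Real.exp (C₁ * |y - x|) := by
      intro x hx y hy
      have h := hpair (-x) (hmap hx) (-y) (hmap hy)
      have habs : |-y - -x| = |y - x| := by
        rw [show -y - -x = -(y - x) by ring, abs_neg]
      rw [habs, hnegabs x hx, hnegabs y hy] at h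
      exact h
    obtain ⟨heB', heA'⟩ := endpoints_anti hmF (himF φ) (habF φ).le
    have hA : w (-1) = aF φ := by
      simp only [hwdef]; rw [neg_neg]; exact heA'
    have hB : w 1 = bF φ := by
      simp only [hwdef]; exact heB'
    have hwpq : w p < w q := hmW ⟨hp, le_trans hpq.le hq⟩ ⟨le_trans hp hpq.le, hq⟩ hpq
    have hcontW : ContinuousOn w (Icc (-1:ℝ) 1) :=
      (hregF φ).continuousOn.comp continuous_neg.continuousOn hmap
    have hS : vF φ '' (vG γ '' Icc (-1:ℝ) 1) = Icc (w p) (w q) := by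
      rw [himG γ]
      have h2 : vF φ '' Icc (aG γ) (bG γ) = w '' Icc p q := by
        rw [show w = vF φ ∘ (fun x : ℝ => -x) from rfl, Set.image_comp]
        rw [show Icc p q = Icc (-bG γ) (-aG γ) from by rw [hpdef, hqdef]]
        rw [neg_image_Icc]
      rw [h2, image_Icc_eq hmW hcontW hp hq hpq.le]
    have hqple : q - p ≤ 2 / lamg := by
      have he : q - p = bG γ - aG γ := by rw [hpdef, hqdef]; ring
      linarith
    have hspG2 : ∀ σ' ∈ ({-1, 1} : Set ℝ), σ' ∉ Icc p q →
        q - p ≤ Ξg * Metric.infDist σ' (Set.Ioo p q) := by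
      intro σ' hσ' hni
      have hσ'' : σ' = -1 ∨ σ' = 1 := by simpa using hσ'
      have hmem : -σ' ∈ ({-1, 1} : Set ℝ) := by
        rcases hσ'' with rfl | rfl <;> norm_num
      have hcases : σ' < p ∨ q < σ' := by
        simp only [mem_Icc, not_and_or, not_le] at hni
        exact hni
      rcases hcases with h | h
      · have hbσ : bG γ ≤ -σ' := by rw [hpdef] at h; linarith
        have hni2 : -σ' ∉ Icc (aG γ) (bG γ) := by
          intro hm2
          rw [hpdef] at h
          have := hm2.2
          linarith
        have hsp2 := hspG γ (-σ') hmem hni2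
        rw [infDist_Ioo_right (habG γ) hbσ] at hsp2
        rw [infDist_Ioo_left hpq h.le]
        rw [hpdef, hqdef]
        have he : -bG γ - σ' = -σ' - bG γ := by ring
        rw [he]
        linarith
      · have haσ : -σ' ≤ aG γ := by rw [hqdef] at h; linarith
        have hni2 : -σ' ∉ Icc (aG γ) (bG γ) := by
          intro hm2
          rw [hqdef] at h
          have := hm2.1
          linarith
        have hsp2 := hspG γ (-σ') hmem hni2
        rw [infDist_Ioo_left (habG γ) haσ] at hsp2
        rw [infDist_Ioo_right hpq h.le]
        rw [hpdef, hqdef]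
        have he : σ' - -aG γ = aG γ - -σ' := by ring
        rw [he]
        linarith
    rw [hS, interior_Icc] at hσcl ⊢
    rw [closure_Ioo (ne_of_lt hwpq)] at hσcl
    rw [Real.volume_Ioo, ENNReal.toReal_ofReal (by linarith)]
    exact core_mono hC₁ hlamg hp hq hpq hw hρc hρ0 hG hmW hA hB (haF φ) (hbF φ)
      hqple (hspF φ) hspG2 σ hσ hσcl
end

section
/- Let n ∈ ℕ, let σ ∈ {−1,1}, and let v : [−1,1] → ℝ be C^{n+1}. Set τ = v(σ) and define Ŝ(x) = (τ − v(x))/(σ − x) for x ∈ [−1,1] with x ≠ σ. Then for every x ∈ [−1,1] with x ≠ σ there exists w strictly between x and σ such that Ŝ^{(n)}(x) = v^{(n+1)}(w)/(n+1). -/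
open Set
open scoped Nat

private lemma chord_aux (σ : ℝ) (hσ : σ = -1 ∨ σ = 1) (v : ℝ → ℝ) (n : ℕ)
    (hv : ContDiffOn ℝ (n + 1 : ℕ) v (Set.Icc (-1) 1)) :
    ∀ x ∈ Set.Icc (-1 : ℝ) 1 \ {σ},
      iteratedDerivWithin n (fun y => (v σ - v y) / (σ - y)) (Set.Icc (-1) 1 \ {σ}) x
        = n ! * (v σ - taylorWithinEval v n (Set.Icc (-1) 1) x σ) / (σ - x) ^ (n + 1) := by
  have hIcc : ((-1 : ℝ)) < 1 := by norm_num
  have hU : UniqueDiffOn ℝ (Set.Icc (-1 : ℝ) 1 \ {σ}) := by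
    rcases hσ with h | h <;> subst h
    · rw [Set.Icc_diff_left]; exact uniqueDiffOn_Ioc _ _
    · rw [Set.Icc_sdiff_right]; exact uniqueDiffOn_Ico _ _
  induction n with
  | zero =>
    intro x hx
    simp
  | succ n IH =>
    intro x hx
    have hxσ : x ≠ σ := by simpa using hx.2
    have hσx : σ - x ≠ 0 := sub_ne_zero.mpr (Ne.symm hxσ)
    have hUx : UniqueDiffWithinAt ℝ (Set.Icc (-1 : ℝ) 1 \ {σ}) x := hU x hx
    have hmem : (Set.Icc (-1 : ℝ) 1 \ {σ}) ∈ nhdsWithin x (Set.Icc (-1 : ℝ) 1) := by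
      rw [Set.diff_eq]
      exact Filter.inter_mem self_mem_nhdsWithin
        (mem_nhdsWithin_of_mem_nhds (isOpen_compl_singleton.mem_nhds hx.2))
    set D := iteratedDerivWithin (n + 1) v (Set.Icc (-1 : ℝ) 1) with hD
    have hf' : DifferentiableWithinAt ℝ (iteratedDerivWithin n v (Set.Icc (-1 : ℝ) 1))
        (Set.Icc (-1 : ℝ) 1) x := by
      refine (hv.differentiableOn_iteratedDerivWithin ?_ (uniqueDiffOn_Icc hIcc)) x hx.1
      exact_mod_cast Nat.lt_succ_of_lt n.lt_succ_self
    have hQ : HasDerivWithinAt (fun t => taylorWithinEval v n (Set.Icc (-1 : ℝ) 1) t σ)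
        (((n ! : ℝ)⁻¹ * (σ - x) ^ n) • D x) (Set.Icc (-1 : ℝ) 1 \ {σ}) x := by
      exact hasDerivWithinAt_taylorWithinEval (uniqueDiffOn_Icc hIcc) hmem hx
        Set.diff_subset (hv.of_le (by exact_mod_cast Nat.le_add_right n 2) : ContDiffOn ℝ n v _) hf'
    have hN : HasDerivWithinAt
        (fun t => (n ! : ℝ) * (v σ - taylorWithinEval v n (Set.Icc (-1 : ℝ) 1) t σ))
        ((n ! : ℝ) * (0 - ((n ! : ℝ)⁻¹ * (σ - x) ^ n) • D x)) (Set.Icc (-1 : ℝ) 1 \ {σ}) x :=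
      ((hasDerivWithinAt_const x _ (v σ)).sub hQ).const_mul _
    have hM : HasDerivWithinAt (fun t => (σ - t) ^ (n + 1))
        (-(n + 1 : ℝ) * (σ - x) ^ n) (Set.Icc (-1 : ℝ) 1 \ {σ}) x :=
      (monomial_has_deriv_aux x σ n).hasDerivWithinAt
    have hg := hN.fun_div hM (pow_ne_zero _ hσx)
    have step1 : iteratedDerivWithin (n + 1) (fun y => (v σ - v y) / (σ - y))
        (Set.Icc (-1 : ℝ) 1 \ {σ}) x
        = derivWithin (fun t => (n ! : ℝ) *
            (v σ - taylorWithinEval v n (Set.Icc (-1 : ℝ) 1) t σ) / (σ - t) ^ (n + 1))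
            (Set.Icc (-1 : ℝ) 1 \ {σ}) x := by
      rw [iteratedDerivWithin_succ]
      exact derivWithin_congr (fun y hy => IH hv.of_succ y hy) (IH hv.of_succ x hx)
    rw [step1, hg.derivWithin hUx]
    have hfac : ((n ! : ℝ)) ≠ 0 := by exact_mod_cast n.factorial_ne_zero
    rw [taylorWithinEval_succ]
    simp only [smul_eq_mul, Nat.factorial_succ]
    push_cast
    field_simp
    ring

/-- Mean-value identity for the chord slope: if `v` is `C^{n+1}` on
`[-1,1]`, `σ = ±1`, `Ŝ(x) = (v(σ) - v(x))/(σ - x)`, then for every `x ∈ [-1,1]` with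
`x ≠ σ` there is `w` strictly between `x` and `σ` with `Ŝ^{(n)}(x) = v^{(n+1)}(w)/(n+1)`. -/
theorem chord_slope_mean_value
    (n : ℕ) (σ : ℝ) (hσ : σ = -1 ∨ σ = 1) (v : ℝ → ℝ)
    (hv : ContDiffOn ℝ (n + 1 : ℕ) v (Set.Icc (-1) 1)) :
    ∀ x ∈ Set.Icc (-1 : ℝ) 1, x ≠ σ →
      ∃ w ∈ Set.Ioo (min x σ) (max x σ),
        iteratedDerivWithin n (fun y => (v σ - v y) / (σ - y))
            (Set.Icc (-1) 1 \ {σ}) x =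
          iteratedDerivWithin (n + 1) v (Set.Icc (-1) 1) w / (n + 1) := by
  intro x hxI hxσ
  have hIcc : ((-1 : ℝ)) < 1 := by norm_num
  have hσmem : σ ∈ Set.Icc (-1 : ℝ) 1 := by rcases hσ with h | h <;> subst h <;> norm_num
  set s : Set ℝ := Set.Icc (-1 : ℝ) 1 with hs
  set D := iteratedDerivWithin (n + 1) v s with hD
  have hid := chord_aux σ hσ v n hv x ⟨hxI, by simpa using hxσ⟩
  set a := min x σ with ha
  set b := max x σ with hb
  have hab : a < b := min_lt_max.mpr hxσ
  have hIoo : Set.Ioo a b ⊆ Set.Ioo (-1 : ℝ) 1 := by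
    intro y hy
    constructor
    · exact lt_of_le_of_lt (le_min hxI.1 hσmem.1) hy.1
    · exact lt_of_lt_of_le hy.2 (max_le hxI.2 hσmem.2)
  have hsub : Set.Icc a b ⊆ s := Set.Icc_subset_Icc (le_min hxI.1 hσmem.1) (max_le hxI.2 hσmem.2)
  have hdiff' : DifferentiableOn ℝ (iteratedDerivWithin n v s) (Set.Ioo (-1 : ℝ) 1) := by
    refine ((hv.differentiableOn_iteratedDerivWithin ?_ (uniqueDiffOn_Icc hIcc))).mono
      Set.Ioo_subset_Icc_self
    exact_mod_cast n.lt_succ_self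
  set F : ℝ → ℝ := fun t => v σ - taylorWithinEval v n s t σ with hF
  set F' : ℝ → ℝ := fun t => -(((n ! : ℝ)⁻¹ * (σ - t) ^ n) * D t) with hF'
  set G : ℝ → ℝ := fun t => (σ - t) ^ (n + 1) with hG
  set G' : ℝ → ℝ := fun t => -((n : ℝ) + 1) * (σ - t) ^ n with hG'
  have hFc : ContinuousOn F (Set.Icc a b) :=
    (continuousOn_const.sub ((continuousOn_taylorWithinEval (uniqueDiffOn_Icc hIcc)
      hv.of_succ).mono hsub))
  have hFd : ∀ t ∈ Set.Ioo a b, HasDerivAt F (F' t) t := by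
    intro t ht
    have h1 := taylorWithinEval_hasDerivAt_Ioo σ hIcc (hIoo ht) hv.of_succ hdiff'
    have h2 := h1.const_sub (v σ)
    simpa [hF, hF', smul_eq_mul] using h2
  have hGc : ContinuousOn G (Set.Icc a b) :=
    ((continuousOn_const.sub continuousOn_id).pow _)
  have hGd : ∀ t ∈ Set.Ioo a b, HasDerivAt G (G' t) t := by
    intro t ht
    have := monomial_has_deriv_aux t σ n
    simpa [hG, hG'] using this
  obtain ⟨c, hc, hMVT⟩ :=
    exists_ratio_hasDerivAt_eq_ratio_slope F F' hab hFc hFd G G' hGc hGd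
  refine ⟨c, hc, ?_⟩
  have hFσ : F σ = 0 := by simp [hF]
  have hGσ : G σ = 0 := by simp [hG]
  have hxab : (a = x ∧ b = σ) ∨ (a = σ ∧ b = x) := by
    rcases le_total x σ with h | h
    · left; exact ⟨min_eq_left h, max_eq_right h⟩
    · right; exact ⟨min_eq_right h, max_eq_left h⟩
  have hkey : G x * F' c = F x * G' c := by
    rcases hxab with ⟨h1, h2⟩ | ⟨h1, h2⟩
    · rw [h1, h2, hFσ, hGσ] at hMVT; linear_combination -hMVT
    · rw [h1, h2, hFσ, hGσ] at hMVT; linear_combination hMVT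
  have hσc : σ - c ≠ 0 := by
    rcases hxab with ⟨h1, h2⟩ | ⟨h1, h2⟩
    · have : c < σ := h2 ▸ hc.2
      exact sub_ne_zero.mpr (ne_of_gt this)
    · have : σ < c := h1 ▸ hc.1
      exact sub_ne_zero.mpr (ne_of_lt this)
  have hσcn : (σ - c) ^ n ≠ 0 := pow_ne_zero _ hσc
  have hσx : σ - x ≠ 0 := sub_ne_zero.mpr (Ne.symm hxσ)
  have hfac : ((n ! : ℝ)) ≠ 0 := by exact_mod_cast n.factorial_ne_zero
  have hn1 : ((n : ℝ) + 1) ≠ 0 := by positivity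
  -- cancel (σ - c)^n from hkey
  have hkey2 : (σ - x) ^ (n + 1) * (-((n ! : ℝ)⁻¹ * D c)) =
      F x * (-((n : ℝ) + 1)) := by
    have h3 : ((σ - x) ^ (n + 1) * (-((n ! : ℝ)⁻¹ * D c))) * (σ - c) ^ n =
        (F x * (-((n : ℝ) + 1))) * (σ - c) ^ n := by
      simp only [hG, hG', hF'] at hkey
      linear_combination hkey
    exact mul_right_cancel₀ hσcn h3
  rw [hid]
  push_cast
  field_simp
  field_simp at hkey2
  simp only [hF, hs] at hkey2
  linear_combination hkey2
end
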